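/- Let P ≥ 1 and Q ≥ 2 be integers. Then lim_{ξ→0⁺} (1 − (2/Γ(Q))·ξ^{Q/2}·K_Q(2·√ξ))^P / (ξ^P/(Q−1)^P) = 1. -/

import Mathlib

open Filter MeasureTheory Set

/-- The modified Bessel function of the second kind, via its integral representation
`K_ν(x) = ∫₀^∞ exp(−x cosh t) cosh(ν t) dt`. -/
noncomputable def besselK (ν x : ℝ) : ℝ :=
  ∫ t in Set.Ioi (0 : ℝ), Real.exp (-x * Real.cosh t) * Real.cosh (ν * t)

lemma gammaNatInt (n : ℕ) :
    IntegrableOn (fun s : ℝ => Real.exp (-s) * s ^ n) (Set.Ioi 0) := by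
  have h := Real.GammaIntegral_convergent (s := (n : ℝ) + 1) (by positivity)
  refine h.congr_fun (fun x hx => ?_) measurableSet_Ioi
  rw [add_sub_cancel_right]; simp only [Real.rpow_natCast]

lemma int1 (ξ : ℝ) (hξ : 0 ≤ ξ) (n : ℕ) :
    IntegrableOn (fun s : ℝ => Real.exp (-s - ξ / s) * s ^ n) (Set.Ioi 0) := by
  refine (gammaNatInt n).mono' ?_ ?_
  · refine ContinuousOn.aestronglyMeasurable ?_ measurableSet_Ioi
    refine ContinuousOn.mul ?_ (continuousOn_id.pow n)
    exact Real.continuous_exp.comp_continuousOn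
      ((continuousOn_id.neg).sub (continuousOn_const.div continuousOn_id
        (fun x hx => ne_of_gt hx)))
  · refine (ae_restrict_iff' measurableSet_Ioi).2 (Eventually.of_forall fun s hs => ?_)
    have hs0 : (0:ℝ) < s := hs
    rw [Real.norm_eq_abs, abs_of_nonneg (by positivity)]
    have h1 : Real.exp (-s - ξ / s) ≤ Real.exp (-s) :=
      Real.exp_le_exp.2 (sub_le_self _ (div_nonneg hξ hs0.le))
    exact mul_le_mul_of_nonneg_right h1 (by positivity)

lemma range_aux {c : ℝ} (hc : 0 < c) :
    (fun t : ℝ => c * Real.exp t) '' Set.univ = Set.Ioi 0 := by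
  rw [Set.image_univ]
  ext x
  simp only [Set.mem_range, Set.mem_Ioi]
  constructor
  · rintro ⟨t, rfl⟩; positivity
  · intro hx
    exact ⟨Real.log (x / c), by rw [Real.exp_log (by positivity)]; field_simp⟩

lemma inj_aux {c : ℝ} (hc : 0 < c) :
    Set.InjOn (fun t : ℝ => c * Real.exp t) Set.univ := by
  intro a _ b _ h
  have := mul_left_cancel₀ (ne_of_gt hc) h
  exact Real.exp_injective this

lemma deriv_aux (c : ℝ) (x : ℝ) :
    HasDerivWithinAt (fun t : ℝ => c * Real.exp t) (c * Real.exp x) Set.univ x :=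
  ((Real.hasDerivAt_exp x).const_mul c).hasDerivWithinAt

lemma cov {ξ : ℝ} (hξ : 0 < ξ) (g : ℝ → ℝ) :
    ∫ s in Set.Ioi (0:ℝ), g s
      = ∫ t : ℝ, (Real.sqrt ξ * Real.exp t) * g (Real.sqrt ξ * Real.exp t) := by
  have hc : 0 < Real.sqrt ξ := Real.sqrt_pos.2 hξ
  have h := integral_image_eq_integral_abs_deriv_smul (f' := fun t => Real.sqrt ξ * Real.exp t)
    MeasurableSet.univ (fun x _ => deriv_aux (Real.sqrt ξ) x) (inj_aux hc) g
  rw [range_aux hc] at h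
  rw [h, Measure.restrict_univ]
  refine integral_congr_ae (Eventually.of_forall fun t => ?_)
  simp only [smul_eq_mul]
  rw [abs_of_pos (by positivity)]

lemma covInt {ξ : ℝ} (hξ : 0 < ξ) (g : ℝ → ℝ) :
    IntegrableOn g (Set.Ioi 0) ↔
      Integrable (fun t : ℝ => (Real.sqrt ξ * Real.exp t) * g (Real.sqrt ξ * Real.exp t)) := by
  have hc : 0 < Real.sqrt ξ := Real.sqrt_pos.2 hξ
  have h := integrableOn_image_iff_integrableOn_abs_deriv_smul
    (f' := fun t => Real.sqrt ξ * Real.exp t)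
    MeasurableSet.univ (fun x _ => deriv_aux (Real.sqrt ξ) x) (inj_aux hc) g
  rw [range_aux hc] at h
  rw [h, IntegrableOn, Measure.restrict_univ]
  apply integrable_congr
  refine Eventually.of_forall fun t => ?_
  simp only [smul_eq_mul]
  rw [abs_of_pos (by positivity)]

lemma key {Q : ℕ} (hQ : 2 ≤ Q) {ξ : ℝ} (hξ : 0 < ξ) :
    2 * ξ ^ ((Q : ℝ) / 2) * besselK Q (2 * Real.sqrt ξ)
      = ∫ s in Set.Ioi (0:ℝ), Real.exp (-s - ξ / s) * s ^ (Q - 1) := by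
  set c := Real.sqrt ξ with hcdef
  have hc : 0 < c := Real.sqrt_pos.2 hξ
  have hcc : c * c = ξ := Real.mul_self_sqrt hξ.le
  set f₀ : ℝ → ℝ := fun t => Real.exp (-(2 * c) * Real.cosh t) * Real.exp ((Q:ℝ) * t)
    with hf₀def
  have hpt : ∀ t : ℝ, (c * Real.exp t) *
      (Real.exp (-(c * Real.exp t) - ξ / (c * Real.exp t)) * (c * Real.exp t) ^ (Q-1))
      = c ^ Q * f₀ t := by
    intro t
    have het : (0:ℝ) < Real.exp t := Real.exp_pos t
    have h1 : ξ / (c * Real.exp t) = c * Real.exp (-t) := by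
      rw [Real.exp_neg, ← hcc]
      field_simp
    have h2 : -(c * Real.exp t) - ξ / (c * Real.exp t) = -(2*c) * Real.cosh t := by
      rw [h1, Real.cosh_eq]; ring
    have h3 : (c * Real.exp t) * (c * Real.exp t) ^ (Q - 1)
        = c ^ Q * Real.exp ((Q:ℝ)*t) := by
      rw [← pow_succ' (c * Real.exp t) (Q-1), Nat.sub_add_cancel (by omega), mul_pow,
        ← Real.exp_nat_mul]
    rw [h2]
    calc (c * Real.exp t) * (Real.exp (-(2*c) * Real.cosh t) * (c * Real.exp t) ^ (Q-1))
        = ((c * Real.exp t) * (c * Real.exp t) ^ (Q-1)) * Real.exp (-(2*c) * Real.cosh t) := by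
          ring
      _ = c ^ Q * f₀ t := by rw [h3, hf₀def]; ring
  have hrhs2 : (∫ s in Set.Ioi (0:ℝ), Real.exp (-s - ξ/s) * s ^ (Q-1))
      = c ^ Q * ∫ t : ℝ, f₀ t := by
    rw [cov hξ (fun s => Real.exp (-s - ξ/s) * s ^ (Q-1)), ← integral_const_mul]
    exact integral_congr_ae (Eventually.of_forall fun t => hpt t)
  have hI : Integrable f₀ := by
    have h := (covInt hξ (fun s => Real.exp (-s - ξ/s) * s ^ (Q-1))).1 (int1 ξ hξ.le (Q-1))
    have h2 : Integrable (fun t => c ^ Q * f₀ t) :=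
      h.congr (Eventually.of_forall fun t => hpt t)
    have h3 := h2.const_mul ((c ^ Q)⁻¹)
    refine h3.congr (Eventually.of_forall fun t => ?_)
    simp only
    rw [← mul_assoc, inv_mul_cancel₀ (by positivity), one_mul]
  have hIn : Integrable (fun t => f₀ (-t)) := hI.comp_neg
  have hsplit : ∫ t : ℝ, f₀ t = ∫ t in Set.Ioi (0:ℝ), (f₀ (-t) + f₀ t) := by
    rw [integral_add hIn.integrableOn hI.integrableOn,
      integral_comp_neg_Ioi, neg_zero]
    exact (intervalIntegral.integral_Iic_add_Ioi hI.integrableOn hI.integrableOn).symm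
  have hcosh : ∀ t : ℝ, f₀ (-t) + f₀ t
      = 2 * (Real.exp (-(2*c) * Real.cosh t) * Real.cosh ((Q:ℝ)*t)) := by
    intro t
    rw [hf₀def]
    simp only [Real.cosh_neg, mul_neg]
    rw [Real.cosh_eq ((Q:ℝ)*t)]
    ring
  have hbes : ∫ t in Set.Ioi (0:ℝ), (f₀ (-t) + f₀ t) = 2 * besselK Q (2 * c) := by
    rw [besselK, ← integral_const_mul]
    refine setIntegral_congr_fun measurableSet_Ioi fun t _ => ?_
    rw [hcosh t]
  have hx : ξ ^ ((Q:ℝ)/2) = c ^ Q := by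
    rw [← Real.rpow_natCast c Q, hcdef, Real.sqrt_eq_rpow, ← Real.rpow_mul hξ.le]
    congr 1
    ring
  rw [hrhs2, hsplit, hbes, hx]
  ring

lemma gammaInt {Q : ℕ} (hQ : 1 ≤ Q) :
    Real.Gamma Q = ∫ s in Set.Ioi (0:ℝ), Real.exp (-s) * s ^ (Q - 1) := by
  have h0 : 0 < (Q:ℝ) := by exact_mod_cast (by omega : 0 < Q)
  rw [Real.Gamma_eq_integral h0]
  refine setIntegral_congr_fun measurableSet_Ioi fun x hx => ?_
  congr 1
  rw [← Real.rpow_natCast x (Q-1)]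
  congr 1
  rw [Nat.cast_sub hQ, Nat.cast_one]

lemma dct {Q : ℕ} (hQ : 2 ≤ Q) :
    Tendsto (fun ξ : ℝ => ∫ s in Set.Ioi (0:ℝ),
        Real.exp (-s) * ((1 - Real.exp (-(ξ/s)))/ξ) * s ^ (Q-1))
      (nhdsWithin 0 (Set.Ioi 0))
      (nhds (∫ s in Set.Ioi (0:ℝ), Real.exp (-s) * s ^ (Q-2))) := by
  refine tendsto_integral_filter_of_dominated_convergence
    (fun s => Real.exp (-s) * s ^ (Q-2)) ?_ ?_ (gammaNatInt (Q-2)) ?_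
  · filter_upwards [self_mem_nhdsWithin] with ξ hξ
    refine ContinuousOn.aestronglyMeasurable ?_ measurableSet_Ioi
    have hdiv : ContinuousOn (fun s : ℝ => ξ/s) (Set.Ioi 0) :=
      continuousOn_const.div continuousOn_id (fun x hx => ne_of_gt hx)
    have h2 : ContinuousOn (fun s : ℝ => (1 - Real.exp (-(ξ/s)))/ξ) (Set.Ioi 0) :=
      (continuousOn_const.sub (Real.continuous_exp.comp_continuousOn hdiv.neg)).div_const ξ
    exact (((Real.continuous_exp.comp continuous_neg).continuousOn.mul h2)).mul
      (continuousOn_id.pow _)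
  · filter_upwards [self_mem_nhdsWithin] with ξ hξ
    have hξ' : (0:ℝ) < ξ := hξ
    refine (ae_restrict_iff' measurableSet_Ioi).2 (Eventually.of_forall fun s hs => ?_)
    have hs' : (0:ℝ) < s := hs
    have h1 : Real.exp (-(ξ/s)) ≤ 1 := by
      rw [← Real.exp_zero]
      refine Real.exp_le_exp.2 ?_
      have : 0 ≤ ξ/s := by positivity
      linarith
    have h2 : 1 - Real.exp (-(ξ/s)) ≤ ξ/s := by
      have := Real.add_one_le_exp (-(ξ/s)); linarith
    have hpow : s ^ (Q-1) = s ^ (Q-2) * s := by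
      rw [← pow_succ]; congr 1; omega
    have hmid : (1 - Real.exp (-(ξ/s)))/ξ ≤ 1/s := by
      have h3 : (1 - Real.exp (-(ξ/s)))/ξ ≤ (ξ/s)/ξ := by
        exact div_le_div_of_nonneg_right h2 hξ'.le
      have h4 : (ξ/s)/ξ = 1/s := by field_simp
      linarith [h3, h4.le]
    rw [Real.norm_eq_abs, abs_of_nonneg (mul_nonneg (mul_nonneg (Real.exp_nonneg _)
      (div_nonneg (by linarith) hξ'.le)) (by positivity))]
    calc Real.exp (-s) * ((1 - Real.exp (-(ξ/s)))/ξ) * s ^ (Q-1)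
        ≤ Real.exp (-s) * (1/s) * s ^ (Q-1) := by gcongr
      _ = Real.exp (-s) * s ^ (Q-2) := by rw [hpow]; field_simp
  · refine (ae_restrict_iff' measurableSet_Ioi).2 (Eventually.of_forall fun s hs => ?_)
    have hs' : (0:ℝ) < s := hs
    have hd : HasDerivAt (fun ξ : ℝ => 1 - Real.exp (-(ξ/s))) (1/s) 0 := by
      have h1 : HasDerivAt (fun ξ : ℝ => -(ξ/s)) (-(1/s)) 0 :=
        ((hasDerivAt_id (0:ℝ)).div_const s).neg
      have h2 := h1.exp
      have h3 := (hasDerivAt_const (0:ℝ) (1:ℝ)).sub h2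
      exact h3.congr_deriv (by simp)
    have hslope := hasDerivAt_iff_tendsto_slope.mp hd
    have hmono : nhdsWithin (0:ℝ) (Set.Ioi 0) ≤ nhdsWithin (0:ℝ) {(0:ℝ)}ᶜ :=
      nhdsWithin_mono 0 (fun x hx => ne_of_gt hx)
    have hcore : Tendsto (fun ξ : ℝ => (1 - Real.exp (-(ξ/s)))/ξ)
        (nhdsWithin 0 (Set.Ioi 0)) (nhds (1/s)) := by
      refine Tendsto.congr (fun ξ => ?_) (hslope.mono_left hmono)
      rw [slope_def_field]
      simp
    have hfin := (hcore.const_mul (Real.exp (-s))).mul_const (s ^ (Q-1))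
    have hval : Real.exp (-s) * (1/s) * s ^ (Q-1) = Real.exp (-s) * s ^ (Q-2) := by
      have hpow : s ^ (Q-1) = s ^ (Q-2) * s := by
        rw [← pow_succ]; congr 1; omega
      rw [hpow]; field_simp
    rw [← hval]
    exact hfin

theorem stmt_8 (P Q : ℕ) (hP : 1 ≤ P) (hQ : 2 ≤ Q) :
    Tendsto
      (fun ξ : ℝ =>
        (1 - (2 / Real.Gamma Q) * ξ ^ ((Q : ℝ) / 2) * besselK Q (2 * Real.sqrt ξ)) ^ P /
          (ξ ^ P / ((Q : ℝ) - 1) ^ P))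
      (nhdsWithin 0 (Set.Ioi 0)) (nhds 1) := by
  have hQR : (0:ℝ) < (Q:ℝ) - 1 := by
    have : (2:ℝ) ≤ (Q:ℝ) := by exact_mod_cast hQ
    linarith
  have hQ0 : (0:ℝ) < (Q:ℝ) := by linarith
  have hΓpos : 0 < Real.Gamma Q := Real.Gamma_pos_of_pos hQ0
  have hL := dct hQ
  set H : ℝ → ℝ := fun ξ => ∫ s in Set.Ioi (0:ℝ),
    Real.exp (-s) * ((1 - Real.exp (-(ξ/s)))/ξ) * s ^ (Q-1) with hH
  have hLG : (∫ s in Set.Ioi (0:ℝ), Real.exp (-s) * s ^ (Q-2)) = Real.Gamma ((Q:ℝ) - 1) := by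
    have hcast : ((Q - 1 : ℕ) : ℝ) = (Q:ℝ) - 1 := by
      rw [Nat.cast_sub (by omega), Nat.cast_one]
    rw [← hcast, gammaInt (by omega : 1 ≤ Q - 1)]
    simp only [show Q - 1 - 1 = Q - 2 from by omega]
  have hGam : ((Q:ℝ) - 1) * Real.Gamma ((Q:ℝ) - 1) = Real.Gamma Q := by
    have h := Real.Gamma_add_one (ne_of_gt hQR)
    rw [sub_add_cancel] at h
    exact h.symm
  have hmain : Tendsto (fun ξ => ((Q:ℝ)-1)/Real.Gamma Q * H ξ)
      (nhdsWithin 0 (Set.Ioi 0)) (nhds 1) := by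
    have h := hL.const_mul (((Q:ℝ)-1)/Real.Gamma Q)
    rw [hLG] at h
    have hval : ((Q:ℝ)-1)/Real.Gamma Q * Real.Gamma ((Q:ℝ)-1) = 1 := by
      rw [div_mul_eq_mul_div, mul_comm, mul_comm (Real.Gamma ((Q:ℝ)-1)) _, hGam,
        div_self (ne_of_gt hΓpos)]
    rw [hval] at h
    exact h
  have heq : ∀ᶠ ξ in nhdsWithin (0:ℝ) (Set.Ioi 0),
      (((Q:ℝ)-1)/Real.Gamma Q * H ξ) ^ P =
      (1 - (2 / Real.Gamma Q) * ξ ^ ((Q : ℝ) / 2) * besselK Q (2 * Real.sqrt ξ)) ^ P /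
          (ξ ^ P / ((Q : ℝ) - 1) ^ P) := by
    filter_upwards [self_mem_nhdsWithin] with ξ hξ
    have hξ' : (0:ℝ) < ξ := hξ
    have hk := key hQ hξ'
    have hsub : Real.Gamma Q - (∫ s in Set.Ioi (0:ℝ), Real.exp (-s - ξ/s) * s ^ (Q-1))
        = ξ * H ξ := by
      rw [gammaInt (by omega : 1 ≤ Q),
        ← integral_sub (gammaNatInt (Q-1)) (int1 ξ hξ'.le (Q-1)), hH, ← integral_const_mul]
      refine setIntegral_congr_fun measurableSet_Ioi fun s hs => ?_
      have hs' : (0:ℝ) < s := hs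
      have hexp : Real.exp (-s - ξ/s) = Real.exp (-s) * Real.exp (-(ξ/s)) := by
        rw [show -s - ξ/s = -s + -(ξ/s) from by ring, Real.exp_add]
      rw [hexp]
      field_simp
    have h1 : 1 - (2 / Real.Gamma Q) * ξ ^ ((Q:ℝ)/2) * besselK Q (2 * Real.sqrt ξ)
        = ξ * H ξ / Real.Gamma Q := by
      rw [show (2 / Real.Gamma Q) * ξ ^ ((Q:ℝ)/2) * besselK Q (2 * Real.sqrt ξ)
          = (∫ s in Set.Ioi (0:ℝ), Real.exp (-s - ξ/s) * s ^ (Q-1)) / Real.Gamma Q from by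
        rw [← hk]; ring, ← hsub]
      field_simp
    rw [h1, show ξ ^ P / ((Q:ℝ)-1) ^ P = (ξ/((Q:ℝ)-1)) ^ P from (div_pow _ _ _).symm,
      ← div_pow]
    congr 1
    field_simp
  refine Tendsto.congr' heq ?_
  have := hmain.pow P
  simpa using this
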